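/- With real coefficients the parametrised simplicial volume recovers the ordinary simplicial volume: for every oriented closed connected manifold M with fundamental group Γ and every standard Γ-space (X,μ), the infimum of Σ ∫_X |f_j| dμ over all cycles in L^∞(X,μ;R) ⊗_{ZΓ} C_n(M̃;Z) representing the image of [M]_Z equals ‖M‖. -/

import Mathlib

open scoped BigOperators
open Finsupp

noncomputable section

namespace SimplexCategory

/-- The topological simplex associated to `x : SimplexCategory`
(the definition of the older Mathlib). -/
def toTopObj (x : SimplexCategory) : Set (Fin (x.len + 1) → NNReal) :=
  {f | ∑ i, f i = 1}

instance (x : SimplexCategory) : CoeFun x.toTopObj fun _ => Fin (x.len + 1) → NNReal :=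
  ⟨fun f => (f : Fin (x.len + 1) → NNReal)⟩

/-- A morphism in `SimplexCategory` induces a map on the associated topological spaces. -/
def toTopMap {x y : SimplexCategory} (f : x ⟶ y) (g : x.toTopObj) : y.toTopObj :=
  ⟨fun i => ∑ j ∈ Finset.univ.filter (f.toOrderHom · = i), g j, by
    simp only [toTopObj, Set.mem_ofPred_eq]
    rw [← Finset.sum_biUnion]
    · have hg : ∑ i : Fin (x.len + 1), g i = 1 := g.2
      convert hg
      simp [Finset.eq_univ_iff_forall]
    · apply Set.pairwiseDisjoint_filter⟩

theorem continuous_toTopMap {x y : SimplexCategory} (f : x ⟶ y) :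
    Continuous (toTopMap f) := by
  refine Continuous.subtype_mk (continuous_pi fun i => ?_) _
  exact continuous_finsetSum _ (fun j _ => (continuous_apply _).comp continuous_subtype_val)

end SimplexCategory

/-- The topological standard `n`-simplex. -/
abbrev TSimplex (n : ℕ) : Type :=
  (SimplexCategory.toTopObj (SimplexCategory.mk n))

/-- Singular `n`-simplices of a space `X`. -/
abbrev SSimplex (n : ℕ) (X : Type) [TopologicalSpace X] : Type := C(TSimplex n, X)

/-- Singular `n`-chains of `X` with coefficients in an abelian group `A`,
with its `ℓ¹`-flavoured finitely supported model. -/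
abbrev SChains (n : ℕ) (X : Type) [TopologicalSpace X] (A : Type) [AddCommGroup A] : Type :=
  SSimplex n X →₀ A

/-- The `i`-th face inclusion of topological simplices. -/
def face (n : ℕ) (i : Fin (n + 2)) : C(TSimplex n, TSimplex (n + 1)) :=
  ⟨fun t => SimplexCategory.toTopMap (SimplexCategory.δ i) t,
    SimplexCategory.continuous_toTopMap _⟩

/-- The singular boundary operator from degree `n+1` to degree `n`. -/
def bdryMap (n : ℕ) (X : Type) [TopologicalSpace X] (A : Type) [AddCommGroup A] :
    SChains (n + 1) X A →ₗ[ℤ] SChains n X A :=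
  Finsupp.lsum ℤ fun σ =>
    ∑ i : Fin (n + 2), ((-1 : ℤ) ^ (i : ℕ)) •
      (Finsupp.lsingle (σ.comp (face n i)) : A →ₗ[ℤ] SChains n X A)

/-- The boundary operator out of degree `n` (the zero map in degree `0`). -/
def bdryFrom (n : ℕ) (X : Type) [TopologicalSpace X] (A : Type) [AddCommGroup A] :
    SChains n X A →ₗ[ℤ] SChains (n - 1) X A :=
  match n with
  | 0 => 0
  | (m + 1) => bdryMap m X A

/-- Singular `n`-cycles. -/
def cyclesSub (n : ℕ) (X : Type) [TopologicalSpace X] (A : Type) [AddCommGroup A] :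
    Submodule ℤ (SChains n X A) :=
  LinearMap.ker (bdryFrom n X A)

/-- Singular `n`-boundaries. -/
def bdriesSub (n : ℕ) (X : Type) [TopologicalSpace X] (A : Type) [AddCommGroup A] :
    Submodule ℤ (SChains n X A) :=
  LinearMap.range (bdryMap n X A)

/-- The `ℓ¹`-norm of an integral singular chain. -/
def l1Z {n : ℕ} {X : Type} [TopologicalSpace X] (c : SChains n X ℤ) : ℝ :=
  c.sum fun _ a => |(a : ℝ)|

/-- The `ℓ¹`-norm of a real singular chain. -/
def l1R {n : ℕ} {X : Type} [TopologicalSpace X] (c : SChains n X ℝ) : ℝ :=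
  c.sum fun _ a => |a|

/-- Change of coefficients `ℤ → ℝ` on singular chains. -/
def castChain {n : ℕ} {X : Type} [TopologicalSpace X] (c : SChains n X ℤ) : SChains n X ℝ :=
  Finsupp.mapRange (fun a : ℤ => (a : ℝ)) Int.cast_zero c

/-- `z` is an integral fundamental cycle of `X` in degree `n`:  it is a cycle whose homology
class freely generates `H_n(X;ℤ)` (which for an oriented closed connected `n`-manifold
characterises the fundamental class up to sign). -/
def IsFundCycle (n : ℕ) (X : Type) [TopologicalSpace X] (z : SChains n X ℤ) : Prop :=
  z ∈ cyclesSub n X ℤ ∧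
  (∀ w ∈ cyclesSub n X ℤ, ∃ k : ℤ, w - k • z ∈ bdriesSub n X ℤ) ∧
  (∀ k : ℤ, k • z ∈ bdriesSub n X ℤ → k = 0)

/-- The `ℓ¹`-semi-norm (over `ℤ`) of the homology class of the cycle `z`. -/
def clNormZ (n : ℕ) (X : Type) [TopologicalSpace X] (z : SChains n X ℤ) : ℝ :=
  sInf {r : ℝ | ∃ c, c ∈ cyclesSub n X ℤ ∧ c - z ∈ bdriesSub n X ℤ ∧ r = l1Z c}

/-- The `ℓ¹`-semi-norm of the image in real homology of the class of the integral cycle `z`;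
for a fundamental cycle `z` of `M` this is the simplicial volume `‖M‖`. -/
def realSV (n : ℕ) (X : Type) [TopologicalSpace X] (z : SChains n X ℤ) : ℝ :=
  sInf {r : ℝ | ∃ c, c ∈ cyclesSub n X ℝ ∧ castChain z - c ∈ bdriesSub n X ℝ ∧ r = l1R c}

/-- The integral simplicial volume `‖X‖_ℤ`. -/
def intSV (n : ℕ) (X : Type) [TopologicalSpace X] : ℝ :=
  sInf {r : ℝ | ∃ z, IsFundCycle n X z ∧ r = clNormZ n X z}

/-- `N` is an oriented closed connected topological `n`-manifold (orientability is recorded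
through the existence of fundamental cycles in the statements below). -/
def IsClosedConnectedManifold (n : ℕ) (N : Type) [TopologicalSpace N] : Prop :=
  CompactSpace N ∧ ConnectedSpace N ∧ T2Space N ∧
    Nonempty (ChartedSpace (EuclideanSpace ℝ (Fin n)) N)

/-- The data contributing value `r` to the stable integral simplicial volume of `M`:
a `d`-sheeted covering `p : N → M` by an oriented closed connected `n`-manifold `N`
together with a fundamental cycle of `N`, with `r = ‖N‖_ℤ / d`. -/
def IsCoverDatum (n : ℕ) (M : Type) [TopologicalSpace M] (N : Type) [TopologicalSpace N]
    (p : N → M) (d : ℕ) (r : ℝ) : Prop :=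
  IsClosedConnectedManifold n N ∧ 0 < d ∧ IsCoveringMap p ∧
    (∀ x : M, Nat.card (p ⁻¹' {x}) = d) ∧
    ∃ z, IsFundCycle n N z ∧ r = clNormZ n N z / d

/-- The stable integral simplicial volume `‖M‖_ℤ^∞`. -/
def stisv (n : ℕ) (M : Type) [TopologicalSpace M] : ℝ :=
  sInf {r : ℝ | ∃ (N : Type) (tN : TopologicalSpace N) (p : N → M) (d : ℕ),
    @IsCoverDatum n M _ N tN p d r}

end

open MeasureTheory

noncomputable section

/-- A standard `Γ`-space structure on `X`: a probability measure on the standard Borel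
space `X` together with a measurable measure-preserving (left) `Γ`-action. -/
structure StdStr (Γ : Type) [Group Γ] (X : Type) [MeasurableSpace X] where
  μ : Measure X
  borel : StandardBorelSpace X
  prob : IsProbabilityMeasure μ
  act : Γ → X → X
  meas : ∀ g, MeasurePreserving (act g) μ μ
  act_one : ∀ x, act 1 x = x
  act_mul : ∀ g h x, act (g * h) x = act g (act h x)

variable {Γ : Type} [Group Γ] {X : Type} [MeasurableSpace X]

/-- The coefficient module `L^∞(X,μ;ℤ)` (for `b = true`) respectively `L^∞(X,μ;ℝ)`
(for `b = false`), realised as essentially bounded (and, if `b = true`, a.e.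
integer-valued) elements of the space of a.e.-equivalence classes of measurable
real-valued functions. -/
def LinfG (S : StdStr Γ X) (b : Bool) : AddSubgroup (X →ₘ[S.μ] ℝ) where
  carrier := {f | (∃ C : ℝ, ∀ᵐ x ∂S.μ, |f x| ≤ C) ∧
    (b → ∀ᵐ x ∂S.μ, ∃ k : ℤ, f x = (k : ℝ))}
  add_mem' := by
    rintro f g ⟨⟨C, hC⟩, hf⟩ ⟨⟨D, hD⟩, hg⟩
    constructor
    · refine ⟨C + D, ?_⟩
      filter_upwards [hC, hD, AEEqFun.coeFn_add f g] with x h1 h2 h3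
      rw [h3]
      exact (abs_add_le _ _).trans (add_le_add h1 h2)
    · intro hb
      filter_upwards [hf hb, hg hb, AEEqFun.coeFn_add f g] with x ⟨k, hk⟩ ⟨l, hl⟩ h3
      exact ⟨k + l, by rw [h3]; simp [Pi.add_apply, hk, hl]⟩
  zero_mem' := by
    constructor
    · refine ⟨0, ?_⟩
      filter_upwards [AEEqFun.coeFn_zero (μ := S.μ) (β := ℝ)] with x h
      simp [h]
    · intro _
      filter_upwards [AEEqFun.coeFn_zero (μ := S.μ) (β := ℝ)] with x h
      exact ⟨0, by simp [h]⟩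
  neg_mem' := by
    rintro f ⟨⟨C, hC⟩, hf⟩
    constructor
    · refine ⟨C, ?_⟩
      filter_upwards [hC, AEEqFun.coeFn_neg f] with x h1 h2
      rw [h2]; simpa using h1
    · intro hb
      filter_upwards [hf hb, AEEqFun.coeFn_neg f] with x ⟨k, hk⟩ h2
      exact ⟨-k, by rw [h2]; simp [hk]⟩

/-- The right `Γ`-action on `L^∞`: `(f · g)(x) = f(g • x)`. -/
def rhoG (S : StdStr Γ X) (b : Bool) (g : Γ) (f : (LinfG S b)) : (LinfG S b) :=
  ⟨AEEqFun.compMeasurePreserving (f : X →ₘ[S.μ] ℝ) (S.act g) (S.meas g), by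
    obtain ⟨⟨C, hC⟩, hf⟩ := f.2
    constructor
    · refine ⟨C, ?_⟩
      have := (S.meas g).quasiMeasurePreserving.ae hC
      filter_upwards [AEEqFun.coeFn_compMeasurePreserving
        (f : X →ₘ[S.μ] ℝ) (S.meas g), this] with x h1 h2
      rw [h1]; exact h2
    · intro hb
      have := (S.meas g).quasiMeasurePreserving.ae (hf hb)
      filter_upwards [AEEqFun.coeFn_compMeasurePreserving
        (f : X →ₘ[S.μ] ℝ) (S.meas g), this] with x h1 h2
      rw [h1]; exact h2⟩

/-- The constant function with (integer) value `k` in the coefficient module. -/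
def constLG (S : StdStr Γ X) (b : Bool) (k : ℤ) : (LinfG S b) :=
  ⟨k • (AEEqFun.const X (1 : ℝ) : X →ₘ[S.μ] ℝ), by
    constructor
    · refine ⟨|(k : ℝ)|, ?_⟩
      have h1 : ((k • (AEEqFun.const X (1 : ℝ) : X →ₘ[S.μ] ℝ)) : X →ₘ[S.μ] ℝ)
          =ᵐ[S.μ] fun _ => (k : ℝ) := by
        filter_upwards [AEEqFun.coeFn_smul (k : ℤ) (AEEqFun.const X (1 : ℝ) : X →ₘ[S.μ] ℝ),
          AEEqFun.coeFn_const X (1 : ℝ)] with x h2 h3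
        simp [h2, h3]
      filter_upwards [h1] with x h
      rw [h]
    · intro _
      have h1 : ((k • (AEEqFun.const X (1 : ℝ) : X →ₘ[S.μ] ℝ)) : X →ₘ[S.μ] ℝ)
          =ᵐ[S.μ] fun _ => (k : ℝ) := by
        filter_upwards [AEEqFun.coeFn_smul (k : ℤ) (AEEqFun.const X (1 : ℝ) : X →ₘ[S.μ] ℝ),
          AEEqFun.coeFn_const X (1 : ℝ)] with x h2 h3
        simp [h2, h3]
      filter_upwards [h1] with x h
      exact ⟨k, h⟩⟩

theorem constLG_zero (S : StdStr Γ X) (b : Bool) : constLG S b 0 = 0 :=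
  Subtype.ext (zero_smul ℤ _)

variable {Mt : Type} [TopologicalSpace Mt]

/-- Change of coefficients from `ℤ` to `L^∞` (constant functions) on chains of the
universal covering; this realises `C_*(M̃;ℤ) → L^∞ ⊗ C_*(M̃;ℤ)` at the chain level. -/
def iotaChain (S : StdStr Γ X) (b : Bool) {n : ℕ} (c : SChains n Mt ℤ) :
    SChains n Mt (LinfG S b) :=
  Finsupp.mapRange (constLG S b) (constLG_zero S b) c

/-- The submodule of relations defining the twisted coefficients
`L^∞(X;ℤ) ⊗_{ℤΓ} C_n(M̃;ℤ)`:  it is spanned by the elements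
`(g·σ) ⊗ f - σ ⊗ (f·g)`. -/
def relSub (n : ℕ) (actM : Γ → C(Mt, Mt)) (S : StdStr Γ X) (b : Bool) :
    Submodule ℤ (SChains n Mt (LinfG S b)) :=
  Submodule.span ℤ {c | ∃ (g : Γ) (σ : SSimplex n Mt) (f : (LinfG S b)),
    c = Finsupp.single ((actM g).comp σ) f - Finsupp.single σ (rhoG S b g f)}

/-- The parametrised `ℓ¹`-norm `Σ_σ ∫_X |f_σ| dμ` of a twisted chain. -/
def normP (S : StdStr Γ X) (b : Bool) {n : ℕ} (c : SChains n Mt (LinfG S b)) : ℝ :=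
  c.sum fun _ f => ∫ x, |(f : X →ₘ[S.μ] ℝ) x| ∂S.μ

/-- Pushforward of chains along the covering projection. -/
def pushf {M : Type} [TopologicalSpace M] (π : C(Mt, M)) {n : ℕ}
    (c : SChains n Mt ℤ) : SChains n M ℤ :=
  Finsupp.mapDomain (fun σ => π.comp σ) c

/-- `c` is an `X`-parametrised fundamental cycle for the fundamental cycle `z` of `M`:
working in the model `L^∞ ⊗_{ℤΓ} C_*(M̃;ℤ) = C_*(M̃;L^∞)/rel`, the chain `c` is a cycle
of the quotient complex and represents the image of the class of `z` under the change of
coefficients given by the constant inclusion `ℤ ↪ L^∞`. -/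
def IsPFC (n : ℕ) (Γ : Type) [Group Γ] (Mt M : Type) [TopologicalSpace Mt]
    [TopologicalSpace M] (π : C(Mt, M)) (actM : Γ → C(Mt, Mt))
    (X : Type) [MeasurableSpace X] (S : StdStr Γ X) (b : Bool)
    (z : SChains n M ℤ) (c : SChains n Mt (LinfG S b)) : Prop :=
  bdryFrom n Mt (LinfG S b) c ∈ relSub (n - 1) actM S b ∧
  ∃ zt : SChains n Mt ℤ, pushf π zt = z ∧
    c - iotaChain S b zt ∈ relSub n actM S b ⊔ bdriesSub n Mt (LinfG S b)

/-- The `X`-parametrised simplicial volume `⎸M⎹^X` (with integral coefficients for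
`b = true`, with real coefficients for `b = false`). -/
def pSV (b : Bool) (n : ℕ) (Γ : Type) [Group Γ] (Mt M : Type) [TopologicalSpace Mt]
    [TopologicalSpace M] (π : C(Mt, M)) (actM : Γ → C(Mt, Mt))
    (X : Type) [MeasurableSpace X] (S : StdStr Γ X) (z : SChains n M ℤ) : ℝ :=
  sInf {r : ℝ | ∃ c, IsPFC n Γ Mt M π actM X S b z c ∧ r = normP S b c}

/-- The integral foliated simplicial volume `⎸M⎹`: the infimum of the `X`-parametrised
simplicial volumes over all standard `Γ`-spaces `X`. -/
def ifsv (n : ℕ) (Γ : Type) [Group Γ] (Mt M : Type) [TopologicalSpace Mt]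
    [TopologicalSpace M] (π : C(Mt, M)) (actM : Γ → C(Mt, Mt))
    (z : SChains n M ℤ) : ℝ :=
  sInf {r : ℝ | ∃ (X : Type) (mX : MeasurableSpace X) (S : @StdStr Γ _ X mX),
    r = @pSV true n Γ _ Mt M _ _ π actM X mX S z}

/-- `π : M̃ → M` is a universal covering with deck transformation action `actM` of `Γ`
(so that `Γ` is identified with the fundamental group of `M`). -/
structure UnivCover (Γ : Type) [Group Γ] (Mt M : Type) [TopologicalSpace Mt]
    [TopologicalSpace M] (π : C(Mt, M)) (actM : Γ → C(Mt, Mt)) : Prop where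
  covering : IsCoveringMap π
  simplyConnected : SimplyConnectedSpace Mt
  deck_proj : ∀ g x, π (actM g x) = π x
  deck_trans : ∀ x y, π x = π y → ∃ g, actM g x = y
  deck_free : ∀ g x, actM g x = x → g = 1
  act_one : ∀ x, actM 1 x = x
  act_mul : ∀ g h x, actM (g * h) x = actM g (actM h x)

end

section CoveringLifting
open Set Metric

section Step

variable {E B Y : Type} [TopologicalSpace E] [TopologicalSpace B] [TopologicalSpace Y]
  {p : E → B}

/-- Single-step extension of a lift along a covering map, in the time direction. -/
theorem covering_step (hp : IsCoveringMap p) [∀ b : B, Nonempty (p ⁻¹' {b})] (h : Y → ℝ → B)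
    (hh : Continuous fun q : Y × ℝ => h q.1 q.2) (a b : ℝ) (hab : a ≤ b)
    (HU : ∀ x : Y, ∃ V : Set Y, IsOpen V ∧ x ∈ V ∧ ∃ u : B,
      ∀ y ∈ V, ∀ t ∈ Icc a b, h y t ∈ (hp u).toTrivialization.baseSet)
    (g0 : Y → E) (hg0 : Continuous g0) (hg0p : ∀ x, p (g0 x) = h x a) :
    ∃ g : Y → ℝ → E, (Continuous fun q : Y × ℝ => g q.1 q.2) ∧
      (∀ x, g x a = g0 x) ∧ (∀ x, ∀ t ∈ Icc a b, p (g x t) = h x t) := by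
  classical
  choose V hVopen hVmem u hVU using HU
  let T : (x : Y) → Bundle.Trivialization (p ⁻¹' {u x}) p := fun x => (hp (u x)).toTrivialization
  let pr : ℝ → ℝ := fun t => max a (min t b)
  have hpr_mem : ∀ t, pr t ∈ Icc a b := fun t =>
    ⟨le_max_left _ _, max_le hab (min_le_right t b)⟩
  have hpr_eq : ∀ t ∈ Icc a b, pr t = t := fun t ht => by
    simp only [pr, min_eq_left ht.2, max_eq_right ht.1]
  have hpr_cont : Continuous pr := continuous_const.max (continuous_id.min continuous_const)
  let Gh : Y → Y → ℝ → E := fun x y t =>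
    (T x).toPartialHomeomorph.symm (h y t, ((T x) (g0 y)).2)
  let G : Y → Y → ℝ → E := fun x y t => Gh x y (pr t)
  have hsrc : ∀ x, ∀ y ∈ V x, g0 y ∈ (T x).source := by
    intro x y hy
    refine (T x).mem_source.2 ?_
    rw [hg0p]
    exact hVU x y hy a ⟨le_rfl, hab⟩
  have F1 : ∀ x, ∀ y ∈ V x, ∀ t ∈ Icc a b, p (Gh x y t) = h y t := by
    intro x y hy t ht
    exact (T x).proj_symm_apply ((T x).mem_target.2 (hVU x y hy t ht))
  have F2 : ∀ x, ∀ y ∈ V x, Gh x y a = g0 y := by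
    intro x y hy
    have h1 : ((h y a), ((T x) (g0 y)).2) = (T x) (g0 y) := by
      refine Prod.ext ?_ rfl
      rw [(T x).coe_fst (hsrc x y hy), hg0p]
    show (T x).toPartialHomeomorph.symm _ = g0 y
    rw [h1]
    exact (T x).toPartialHomeomorph.left_inv (hsrc x y hy)
  have F3 : ∀ x, ContinuousOn (fun q : Y × ℝ => G x q.1 q.2) (V x ×ˢ univ) := by
    intro x
    have hinner : ContinuousOn
        (fun q : Y × ℝ => (h q.1 (pr q.2), ((T x) (g0 q.1)).2)) (V x ×ˢ univ) := by
      refine ContinuousOn.prodMk ?_ ?_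
      · exact (hh.comp (continuous_fst.prodMk (hpr_cont.comp continuous_snd))).continuousOn
      · refine continuous_snd.comp_continuousOn ?_
        refine (T x).continuousOn_toFun.comp ((hg0.comp continuous_fst).continuousOn) ?_
        intro q hq
        exact hsrc x q.1 hq.1
    refine ((T x).toPartialHomeomorph.continuousOn_symm.comp hinner ?_)
    intro q hq
    rw [(T x).target_eq]
    exact ⟨hVU x q.1 hq.1 (pr q.2) (hpr_mem q.2), mem_univ _⟩
  have F4 : ∀ x1 x2 y, y ∈ V x1 → y ∈ V x2 → ∀ t, G x1 y t = G x2 y t := by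
    intro x1 x2 y hy1 hy2 t
    have key : EqOn (Gh x1 y) (Gh x2 y) (Icc a b) := by
      have ccon : ∀ x, y ∈ V x → ContinuousOn (Gh x y) (Icc a b) := by
        intro x hy
        have hinner : ContinuousOn
            (fun t : ℝ => (h y t, ((T x) (g0 y)).2)) (Icc a b) :=
          ContinuousOn.prodMk ((hh.comp (continuous_const.prodMk continuous_id)).continuousOn)
            continuousOn_const
        refine (T x).toPartialHomeomorph.continuousOn_symm.comp hinner ?_
        intro t ht
        rw [(T x).target_eq]
        exact ⟨hVU x y hy t ht, mem_univ _⟩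
      refine hp.eqOn_of_comp_eqOn isPreconnected_Icc (ccon x1 hy1) (ccon x2 hy2) ?_
        (⟨le_rfl, hab⟩ : a ∈ Icc a b) ?_
      · intro t ht
        show p (Gh x1 y t) = p (Gh x2 y t)
        rw [F1 x1 y hy1 t ht, F1 x2 y hy2 t ht]
      · rw [F2 x1 y hy1, F2 x2 y hy2]
    exact key (hpr_mem t)
  refine ⟨fun y t => G y y t, ?_, ?_, ?_⟩
  · rw [continuous_iff_continuousAt]
    rintro ⟨y0, t0⟩
    have hcg : ContinuousOn (fun q : Y × ℝ => G q.1 q.1 q.2) (V y0 ×ˢ univ) :=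
      (F3 y0).congr (fun q hq => F4 q.1 y0 q.1 (hVmem q.1) hq.1 q.2)
    exact hcg.continuousAt (((hVopen y0).prod isOpen_univ).mem_nhds ⟨hVmem y0, mem_univ _⟩)
  · intro x
    show Gh x x (pr a) = g0 x
    rw [hpr_eq a ⟨le_rfl, hab⟩]
    exact F2 x x (hVmem x)
  · intro x t ht
    show p (Gh x x (pr t)) = h x t
    rw [hpr_eq t ht]
    exact F1 x x (hVmem x) t ht

end Step

section ConvexLift

variable {E B : Type} [TopologicalSpace E] [TopologicalSpace B] {p : E → B}

theorem covering_lift_convex (hp : IsCoveringMap p) [∀ b : B, Nonempty (p ⁻¹' {b})] {ι : Type} [Fintype ι] {C : Set (ι → ℝ)}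
    (hC : Convex ℝ C) (hcomp : IsCompact C) (f : C → B) (hf : Continuous f)
    (v0 : ι → ℝ) (hv0 : v0 ∈ C) (e0 : E) (he0 : p e0 = f ⟨v0, hv0⟩) :
    ∃ g : C → E, Continuous g ∧ ∀ x, p (g x) = f x := by
  classical
  haveI : CompactSpace C := isCompact_iff_compactSpace.1 hcomp
  let cl : ℝ → ℝ := fun t => max 0 (min t 1)
  have hcl_mem : ∀ t, cl t ∈ Icc (0:ℝ) 1 := fun t =>
    ⟨le_max_left _ _, max_le zero_le_one (min_le_right t 1)⟩
  have hcl0 : cl 0 = 0 := by simp [cl]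
  have hcl1 : cl 1 = 1 := by simp [cl]
  have hcl_cont : Continuous cl := continuous_const.max (continuous_id.min continuous_const)
  have hmem : ∀ (x : C) (t : ℝ), v0 + cl t • ((x : ι → ℝ) - v0) ∈ C := by
    intro x t
    have h1 : (1 - cl t) • v0 + cl t • (x : ι → ℝ) ∈ C :=
      hC hv0 x.2 (by linarith [(hcl_mem t).2]) (hcl_mem t).1 (by ring)
    have h2 : (1 - cl t) • v0 + cl t • (x : ι → ℝ) = v0 + cl t • ((x : ι → ℝ) - v0) := by
      rw [sub_smul, one_smul, smul_sub]
      abel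
    rwa [h2] at h1
  let h : C → ℝ → B := fun x t => f ⟨v0 + cl t • ((x : ι → ℝ) - v0), hmem x t⟩
  have hh : Continuous fun q : C × ℝ => h q.1 q.2 := by
    refine hf.comp (Continuous.subtype_mk ?_ _)
    exact continuous_const.add (((hcl_cont.comp continuous_snd)).smul
      ((continuous_subtype_val.comp continuous_fst).sub continuous_const))
  have h_zero : ∀ x : C, h x 0 = f ⟨v0, hv0⟩ := by
    intro x
    show f _ = f _
    congr 1
    apply Subtype.ext
    show v0 + cl 0 • ((x : ι → ℝ) - v0) = v0
    rw [hcl0, zero_smul, add_zero]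
  have h_one : ∀ x : C, h x 1 = f x := by
    intro x
    show f _ = f _
    congr 1
    apply Subtype.ext
    show v0 + cl 1 • ((x : ι → ℝ) - v0) = (x : ι → ℝ)
    rw [hcl1, one_smul, add_sub_cancel]
  -- Lebesgue number
  have hscomp : IsCompact ((univ : Set C) ×ˢ Icc (0:ℝ) 1) := isCompact_univ.prod isCompact_Icc
  obtain ⟨δ, δpos, hδ⟩ := lebesgue_number_lemma_of_metric (ι := B)
    (c := fun b => {q : C × ℝ | h q.1 q.2 ∈ (hp b).toTrivialization.baseSet}) hscomp
    (fun b => (hp b).toTrivialization.open_baseSet.preimage hh)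
    (fun q _ => mem_iUnion.2 ⟨h q.1 q.2, (hp _).mem_toTrivialization_baseSet⟩)
  obtain ⟨N, hN⟩ := exists_nat_one_div_lt δpos
  set Nr : ℕ := N + 1 with hNr
  have hNrpos : (0:ℝ) < Nr := by positivity
  have key : ∀ j : ℕ, j ≤ Nr → ∃ g0 : C → E, Continuous g0 ∧
      ∀ x, p (g0 x) = h x ((j : ℝ) / Nr) := by
    intro j hj
    induction j with
    | zero =>
      refine ⟨fun _ => e0, continuous_const, fun x => ?_⟩
      rw [he0]
      rw [Nat.cast_zero, zero_div, h_zero]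
    | succ j ih =>
      obtain ⟨g0, hg0c, hg0p⟩ := ih (Nat.le_of_succ_le hj)
      have hab : (j : ℝ) / Nr ≤ ((j + 1 : ℕ) : ℝ) / Nr := by
        push_cast
        gcongr
        linarith
      have hjNr : (j : ℝ) / Nr ∈ Icc (0:ℝ) 1 := by
        constructor
        · positivity
        · rw [div_le_one hNrpos]
          exact_mod_cast Nat.le_of_succ_le hj
      have HU : ∀ x : C, ∃ V : Set C, IsOpen V ∧ x ∈ V ∧ ∃ u : B,
          ∀ y ∈ V, ∀ t ∈ Icc ((j : ℝ) / Nr) (((j + 1 : ℕ) : ℝ) / Nr),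
            h y t ∈ (hp u).toTrivialization.baseSet := by
        intro x
        obtain ⟨b, hb⟩ := hδ (x, (j : ℝ) / Nr) ⟨mem_univ _, hjNr⟩
        refine ⟨ball x δ, isOpen_ball, mem_ball_self δpos, b, fun y hy t ht => ?_⟩
        have hball : ((y, t) : C × ℝ) ∈ ball (x, (j : ℝ) / Nr) δ := by
          rw [mem_ball, Prod.dist_eq, max_lt_iff]
          refine ⟨hy, ?_⟩
          rw [Real.dist_eq, abs_of_nonneg (by linarith [ht.1])]
          have h1 : ((j + 1 : ℕ) : ℝ) / Nr - (j : ℝ) / Nr = 1 / Nr := by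
            rw [div_sub_div_same]
            push_cast
            ring_nf
          have h2 : t - (j : ℝ) / Nr ≤ 1 / Nr := by
            have := ht.2
            rw [← h1]
            linarith
          calc t - (j : ℝ) / Nr ≤ 1 / Nr := h2
            _ < δ := by
              have hc : ((Nr : ℝ)) = (N : ℝ) + 1 := by rw [hNr]; push_cast; ring
              rw [hc]
              exact hN
        exact hb hball
      obtain ⟨g, hgc, hga, hgp⟩ := covering_step hp h hh _ _ hab HU g0 hg0c hg0p
      refine ⟨fun x => g x (((j + 1 : ℕ) : ℝ) / Nr), ?_, fun x => ?_⟩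
      · exact hgc.comp (continuous_id.prodMk continuous_const)
      · exact hgp x _ ⟨hab, le_rfl⟩
  obtain ⟨g, hgc, hgp⟩ := key Nr le_rfl
  refine ⟨g, hgc, fun x => ?_⟩
  rw [hgp x, div_self (ne_of_gt hNrpos), h_one]

end ConvexLift

section SimplexLift

variable {E B : Type} [TopologicalSpace E] [TopologicalSpace B] {p : E → B}

/-- From the standard simplex to the topological simplex. -/
noncomputable def stdToT (n : ℕ) (x : stdSimplex ℝ (Fin (n + 1))) : TSimplex n :=
  ⟨fun i => Real.toNNReal (x.1 i), by
    show ∑ i, Real.toNNReal (x.1 i) = 1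
    rw [← NNReal.coe_inj, NNReal.coe_sum, NNReal.coe_one]
    calc ∑ i, ((Real.toNNReal (x.1 i) : ℝ)) = ∑ i, x.1 i := by
          refine Finset.sum_congr rfl fun i _ => Real.coe_toNNReal _ (x.2.1 i)
      _ = 1 := x.2.2⟩

/-- From the topological simplex to the standard simplex. -/
noncomputable def tToStd (n : ℕ) (f : TSimplex n) : stdSimplex ℝ (Fin (n + 1)) :=
  ⟨fun i => (f.1 i : ℝ), fun i => (f.1 i).2, by
    have hf : ∑ i, f.1 i = 1 := f.2
    rw [← NNReal.coe_inj, NNReal.coe_sum] at hf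
    simpa using hf⟩

theorem stdToT_continuous (n : ℕ) : Continuous (stdToT n) :=
  Continuous.subtype_mk (continuous_pi fun i =>
    continuous_real_toNNReal.comp ((continuous_apply i).comp continuous_subtype_val)) _

theorem tToStd_continuous (n : ℕ) : Continuous (tToStd n) :=
  Continuous.subtype_mk (continuous_pi fun i =>
    NNReal.continuous_coe.comp ((continuous_apply (A := fun _ => NNReal) i).comp
      continuous_subtype_val)) _

theorem stdToT_tToStd (n : ℕ) (f : TSimplex n) : stdToT n (tToStd n f) = f := by
  apply Subtype.ext
  funext i
  show Real.toNNReal ((f.1 i : ℝ)) = f.1 i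
  exact Real.toNNReal_coe

theorem stdToT_surjective (n : ℕ) : Function.Surjective (stdToT n) :=
  fun f => ⟨tToStd n f, stdToT_tToStd n f⟩

instance TSimplex.preconnectedSpace (n : ℕ) : PreconnectedSpace (TSimplex n) := by
  haveI : PreconnectedSpace (stdSimplex ℝ (Fin (n + 1))) :=
    Subtype.preconnectedSpace (convex_stdSimplex ℝ _).isPreconnected
  constructor
  have h := (isPreconnected_univ (α := stdSimplex ℝ (Fin (n + 1)))).image
    (stdToT n) (stdToT_continuous n).continuousOn
  rwa [Set.image_univ, Set.range_eq_univ.2 (stdToT_surjective n)] at h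

instance TSimplex.nonempty (n : ℕ) : Nonempty (TSimplex n) :=
  ⟨stdToT n ⟨_, ite_eq_mem_stdSimplex (𝕜 := ℝ) (0 : Fin (n + 1))⟩⟩

theorem IsCoveringMap.surjective_of_nonempty (hp : IsCoveringMap p) [PreconnectedSpace B]
    (e : E) : Function.Surjective p := by
  have hopen : IsOpen (Set.range p) := hp.isOpenMap.isOpen_range
  have hclosed : IsClosed (Set.range p) := by
    rw [← isOpen_compl_iff, isOpen_iff_forall_mem_open]
    intro x hx
    obtain ⟨_, U, hxU, hU, _, H, _⟩ := hp x
    refine ⟨U, ?_, hU, hxU⟩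
    rintro y hy ⟨e', rfl⟩
    exact hx ⟨_, (H ⟨e', hy⟩).2.2⟩
  have huniv : Set.range p = Set.univ :=
    IsClopen.eq_univ ⟨hclosed, hopen⟩ ⟨p e, Set.mem_range_self e⟩
  exact Set.range_eq_univ.1 huniv

theorem exists_simplex_lift (hp : IsCoveringMap p) (hpsurj : Function.Surjective p)
    {k : ℕ} (σ : C(TSimplex k, B)) : ∃ τ : C(TSimplex k, E), ∀ s, p (τ s) = σ s := by
  have hfc : Continuous (fun x : stdSimplex ℝ (Fin (k + 1)) => σ (stdToT k x)) :=
    σ.continuous.comp (stdToT_continuous k)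
  haveI : ∀ b : B, Nonempty (p ⁻¹' {b}) := fun b => ⟨⟨_, (hpsurj b).choose_spec⟩⟩
  obtain ⟨e0, he0⟩ := hpsurj (σ (stdToT k ⟨_, ite_eq_mem_stdSimplex (𝕜 := ℝ) (0 : Fin (k + 1))⟩))
  obtain ⟨g, hgc, hgp⟩ := covering_lift_convex hp (convex_stdSimplex ℝ _)
    (isCompact_stdSimplex ℝ _) _ hfc _ (ite_eq_mem_stdSimplex (𝕜 := ℝ) (0 : Fin (k + 1))) e0 he0
  refine ⟨⟨fun s => g (tToStd k s), hgc.comp (tToStd_continuous k)⟩, fun s => ?_⟩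
  rw [ContinuousMap.coe_mk]
  rw [hgp, stdToT_tToStd]

end SimplexLift

end CoveringLifting

section WeightedSums

variable {α : Type} {A : Type} [AddCommGroup A]

/-- Weighted `ℓ¹`-style sum of a finitely supported function. -/
def wsum (w : A → ℝ) (c : α →₀ A) : ℝ := c.sum fun _ x => w x

theorem wsum_zero (w : A → ℝ) : wsum w (0 : α →₀ A) = 0 := Finsupp.sum_zero_index

theorem wsum_single (w : A → ℝ) (hw0 : w 0 = 0) (a : α) (b : A) :
    wsum w (Finsupp.single a b) = w b := Finsupp.sum_single_index hw0

theorem wsum_eq_sum_of_subset (w : A → ℝ) (hw0 : w 0 = 0) (c : α →₀ A) {s : Finset α}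
    (hs : c.support ⊆ s) : wsum w c = ∑ a ∈ s, w (c a) :=
  Finsupp.sum_of_support_subset c hs _ (fun _ _ => hw0)

theorem wsum_nonneg (w : A → ℝ) (hw : ∀ x, 0 ≤ w x) (c : α →₀ A) : 0 ≤ wsum w c :=
  Finset.sum_nonneg fun _ _ => hw _

theorem wsum_add_le (w : A → ℝ) (hw0 : w 0 = 0)
    (hsub : ∀ x y : A, w (x + y) ≤ w x + w y) (c d : α →₀ A) :
    wsum w (c + d) ≤ wsum w c + wsum w d := by
  classical
  rw [wsum_eq_sum_of_subset w hw0 (c + d) (Finsupp.support_add),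
    wsum_eq_sum_of_subset w hw0 c Finset.subset_union_left,
    wsum_eq_sum_of_subset w hw0 d Finset.subset_union_right, ← Finset.sum_add_distrib]
  exact Finset.sum_le_sum fun i _ => by
    rw [Finsupp.add_apply]; exact hsub _ _

theorem wsum_finsuppSum_le {β G : Type} [AddCommGroup G] (w : A → ℝ) (hw0 : w 0 = 0)
    (hsub : ∀ x y : A, w (x + y) ≤ w x + w y) (hw : ∀ x, 0 ≤ w x)
    (c : β →₀ G) (g : β → G → α →₀ A) :
    wsum w (c.sum g) ≤ ∑ b ∈ c.support, wsum w (g b (c b)) := by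
  classical
  rw [Finsupp.sum]
  induction c.support using Finset.induction with
  | empty => simp [wsum_zero]
  | insert b s hnot ih =>
    rw [Finset.sum_insert hnot, Finset.sum_insert hnot]
    exact le_trans (wsum_add_le w hw0 hsub _ _) (by linarith)

theorem wsum_mapDomain_le {α' : Type} (w : A → ℝ) (hw0 : w 0 = 0)
    (hsub : ∀ x y : A, w (x + y) ≤ w x + w y) (hw : ∀ x, 0 ≤ w x)
    (F : α → α') (c : α →₀ A) : wsum w (Finsupp.mapDomain F c) ≤ wsum w c := by
  classical
  rw [Finsupp.mapDomain]
  refine le_trans (wsum_finsuppSum_le w hw0 hsub hw c _) ?_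
  rw [wsum, Finsupp.sum]
  exact Finset.sum_le_sum fun b _ => le_of_eq (wsum_single w hw0 _ _)

end WeightedSums

section MeasureLemmas

open MeasureTheory

variable {Γ : Type} [Group Γ] {X : Type} [MeasurableSpace X] (S : StdStr Γ X)

theorem LinfG_integrable {b : Bool} (f : LinfG S b) :
    Integrable (fun x => (f : X →ₘ[S.μ] ℝ) x) S.μ := by
  haveI := S.prob
  obtain ⟨C, hC⟩ := f.2.1
  refine ⟨(f : X →ₘ[S.μ] ℝ).aestronglyMeasurable, ?_⟩
  apply MeasureTheory.HasFiniteIntegral.of_bounded (C := C)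
  filter_upwards [hC] with x h
  rwa [Real.norm_eq_abs]

/-- Integration as an additive map on `L^∞(X;ℝ)`. -/
noncomputable def intAM : LinfG S false →+ ℝ where
  toFun f := ∫ x, (f : X →ₘ[S.μ] ℝ) x ∂S.μ
  map_zero' := by
    show ∫ x, ((0 : LinfG S false) : X →ₘ[S.μ] ℝ) x ∂S.μ = 0
    rw [AddSubgroup.coe_zero]
    rw [integral_congr_ae (AEEqFun.coeFn_zero (β := ℝ))]
    simp
  map_add' f g := by
    show ∫ x, ((f + g : LinfG S false) : X →ₘ[S.μ] ℝ) x ∂S.μ = _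
    rw [AddSubgroup.coe_add, integral_congr_ae (AEEqFun.coeFn_add _ _)]
    exact integral_add (LinfG_integrable S f) (LinfG_integrable S g)

/-- Constant functions as elements of `L^∞(X;ℝ)`. -/
noncomputable def constR : ℝ →+ LinfG S false where
  toFun a := ⟨a • (AEEqFun.const X (1 : ℝ) : X →ₘ[S.μ] ℝ), by
    constructor
    · refine ⟨|a|, ?_⟩
      filter_upwards [AEEqFun.coeFn_smul a (AEEqFun.const X (1 : ℝ) : X →ₘ[S.μ] ℝ),
        AEEqFun.coeFn_const X (1 : ℝ)] with x h2 h3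
      rw [h2]
      simp [h3]
    · intro h
      exact absurd h (by simp)⟩
  map_zero' := Subtype.ext (zero_smul ℝ _)
  map_add' a b := Subtype.ext (add_smul a b _)

theorem constR_coeFn (a : ℝ) :
    ((constR S a : LinfG S false) : X →ₘ[S.μ] ℝ) =ᵐ[S.μ] fun _ => a := by
  filter_upwards [AEEqFun.coeFn_smul a (AEEqFun.const X (1 : ℝ) : X →ₘ[S.μ] ℝ),
    AEEqFun.coeFn_const X (1 : ℝ)] with x h2 h3
  show (a • (AEEqFun.const X (1 : ℝ) : X →ₘ[S.μ] ℝ)) x = a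
  rw [h2]
  simp [h3]

theorem intAM_constR (a : ℝ) : intAM S (constR S a) = a := by
  haveI := S.prob
  show ∫ x, _ ∂S.μ = a
  rw [integral_congr_ae (constR_coeFn S a), integral_const]
  simp

theorem abs_intAM_le (f : LinfG S false) :
    |intAM S f| ≤ ∫ x, |(f : X →ₘ[S.μ] ℝ) x| ∂S.μ := by
  rw [← Real.norm_eq_abs]
  refine (norm_integral_le_integral_norm _).trans_eq ?_
  simp only [Real.norm_eq_abs]

theorem int_abs_constR (a : ℝ) :
    ∫ x, |((constR S a : LinfG S false) : X →ₘ[S.μ] ℝ) x| ∂S.μ = |a| := by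
  haveI := S.prob
  have h1 : ∫ x, |((constR S a : LinfG S false) : X →ₘ[S.μ] ℝ) x| ∂S.μ
      = ∫ _x, |a| ∂S.μ := by
    refine integral_congr_ae ?_
    filter_upwards [constR_coeFn S a] with x h
    rw [h]
  rw [h1, integral_const]
  simp

theorem int_abs_zero {b : Bool} :
    ∫ x, |((0 : LinfG S b) : X →ₘ[S.μ] ℝ) x| ∂S.μ = 0 := by
  have h1 : ∫ x, |((0 : LinfG S b) : X →ₘ[S.μ] ℝ) x| ∂S.μ = ∫ _x, |(0:ℝ)| ∂S.μ := by
    refine integral_congr_ae ?_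
    have : ((0 : LinfG S b) : X →ₘ[S.μ] ℝ) = 0 := rfl
    rw [this]
    filter_upwards [AEEqFun.coeFn_zero (β := ℝ) (μ := S.μ)] with x h
    rw [h]
    rfl
  rw [h1]
  simp

theorem int_abs_nonneg {b : Bool} (f : LinfG S b) :
    0 ≤ ∫ x, |(f : X →ₘ[S.μ] ℝ) x| ∂S.μ :=
  integral_nonneg fun _ => abs_nonneg _

theorem int_abs_add_le {b : Bool} (f g : LinfG S b) :
    ∫ x, |((f + g : LinfG S b) : X →ₘ[S.μ] ℝ) x| ∂S.μ ≤
      (∫ x, |(f : X →ₘ[S.μ] ℝ) x| ∂S.μ) + ∫ x, |(g : X →ₘ[S.μ] ℝ) x| ∂S.μ := by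
  have h1 : ∫ x, |((f + g : LinfG S b) : X →ₘ[S.μ] ℝ) x| ∂S.μ
      = ∫ x, |(f : X →ₘ[S.μ] ℝ) x + (g : X →ₘ[S.μ] ℝ) x| ∂S.μ := by
    refine integral_congr_ae ?_
    filter_upwards [AEEqFun.coeFn_add (f : X →ₘ[S.μ] ℝ) (g : X →ₘ[S.μ] ℝ)] with x h
    rw [AddSubgroup.coe_add, h]
    rfl
  rw [h1, ← integral_add (LinfG_integrable S f).abs (LinfG_integrable S g).abs]
  refine integral_mono_ae ?_ ((LinfG_integrable S f).abs.add (LinfG_integrable S g).abs) ?_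
  · refine (Integrable.congr ((LinfG_integrable S (f + g)).abs) ?_)
    rw [AddSubgroup.coe_add]
    filter_upwards [AEEqFun.coeFn_add (f : X →ₘ[S.μ] ℝ) (g : X →ₘ[S.μ] ℝ)] with x h
    rw [h]
    rfl
  · filter_upwards with x using abs_add_le _ _

/-- The action of `Γ` on `X` as a measurable equivalence. -/
noncomputable def actEquiv (g : Γ) : X ≃ᵐ X where
  toFun := S.act g
  invFun := S.act g⁻¹
  left_inv x := by rw [← S.act_mul, inv_mul_cancel, S.act_one]
  right_inv x := by rw [← S.act_mul, mul_inv_cancel, S.act_one]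
  measurable_toFun := (S.meas g).measurable
  measurable_invFun := (S.meas g⁻¹).measurable

theorem rhoG_constR (g : Γ) (a : ℝ) : rhoG S false g (constR S a) = constR S a := by
  apply Subtype.ext
  show ((constR S a : LinfG S false) : X →ₘ[S.μ] ℝ).compMeasurePreserving (S.act g) (S.meas g)
    = ((constR S a : LinfG S false) : X →ₘ[S.μ] ℝ)
  apply MeasureTheory.AEEqFun.ext
  have h1 := (S.meas g).quasiMeasurePreserving.ae (constR_coeFn S a)
  filter_upwards [AEEqFun.coeFn_compMeasurePreserving
    ((constR S a : LinfG S false) : X →ₘ[S.μ] ℝ) (S.meas g), h1, constR_coeFn S a] with x h2 h3 h4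
  rw [h2, h4]
  exact h3

theorem intAM_rhoG (g : Γ) (f : LinfG S false) : intAM S (rhoG S false g f) = intAM S f := by
  show ∫ x, ((rhoG S false g f : LinfG S false) : X →ₘ[S.μ] ℝ) x ∂S.μ
    = ∫ x, (f : X →ₘ[S.μ] ℝ) x ∂S.μ
  have hc : ((rhoG S false g f : LinfG S false) : X →ₘ[S.μ] ℝ)
      = (f : X →ₘ[S.μ] ℝ).compMeasurePreserving (S.act g) (S.meas g) := rfl
  rw [hc, integral_congr_ae (AEEqFun.coeFn_compMeasurePreserving _ (S.meas g))]
  exact (S.meas g).integral_comp (actEquiv S g).measurableEmbedding _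

end MeasureLemmas

section ChainMaps

open MeasureTheory

theorem bdry_single {k : ℕ} {Y : Type} [TopologicalSpace Y] {A : Type} [AddCommGroup A]
    (σ : SSimplex (k + 1) Y) (f : A) :
    bdryMap k Y A (Finsupp.single σ f)
      = ∑ i : Fin (k + 2), ((-1 : ℤ) ^ (i : ℕ)) • Finsupp.single (σ.comp (face k i)) f := by
  rw [bdryMap, Finsupp.lsum_single]
  simp [LinearMap.sum_apply, LinearMap.smul_apply, Finsupp.lsingle_apply]

theorem bdry_lmapDomain {k : ℕ} {Y Z : Type} [TopologicalSpace Y] [TopologicalSpace Z]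
    {A : Type} [AddCommGroup A] (F : C(Y, Z)) (c : SChains (k + 1) Y A) :
    bdryMap k Z A (Finsupp.mapDomain (fun σ => F.comp σ) c)
      = Finsupp.mapDomain (fun σ => F.comp σ) (bdryMap k Y A c) := by
  have h : (bdryMap k Z A).comp
        (Finsupp.lmapDomain A ℤ (fun σ : SSimplex (k + 1) Y => F.comp σ))
      = (Finsupp.lmapDomain A ℤ (fun σ : SSimplex k Y => F.comp σ)).comp (bdryMap k Y A) := by
    apply Finsupp.lhom_ext
    intro σ f
    rw [LinearMap.comp_apply, LinearMap.comp_apply, Finsupp.lmapDomain_apply,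
      Finsupp.mapDomain_single, bdry_single, bdry_single, map_sum]
    refine Finset.sum_congr rfl fun i _ => ?_
    rw [_root_.map_smul, Finsupp.lmapDomain_apply, Finsupp.mapDomain_single, ContinuousMap.comp_assoc]
  have := LinearMap.congr_fun h c
  simpa using this

theorem bdry_mapRange {k : ℕ} {Y : Type} [TopologicalSpace Y]
    {A B : Type} [AddCommGroup A] [AddCommGroup B] (h : A →ₗ[ℤ] B) (c : SChains (k + 1) Y A) :
    bdryMap k Y B (Finsupp.mapRange.linearMap h c)
      = Finsupp.mapRange.linearMap h (bdryMap k Y A c) := by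
  have hcomp : (bdryMap k Y B).comp (Finsupp.mapRange.linearMap h (α := SSimplex (k + 1) Y))
      = (Finsupp.mapRange.linearMap h (α := SSimplex k Y)).comp (bdryMap k Y A) := by
    apply Finsupp.lhom_ext
    intro σ f
    rw [LinearMap.comp_apply, LinearMap.comp_apply, Finsupp.mapRange.linearMap_apply,
      Finsupp.mapRange_single, bdry_single, bdry_single, map_sum]
    refine Finset.sum_congr rfl fun i _ => ?_
    rw [_root_.map_smul, Finsupp.mapRange.linearMap_apply, Finsupp.mapRange_single]
  exact LinearMap.congr_fun hcomp c

variable {Γ : Type} [Group Γ] {X : Type} [MeasurableSpace X] (S : StdStr Γ X)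
variable {Mt M : Type} [TopologicalSpace Mt] [TopologicalSpace M]

/-- The integration chain map `L^∞ ⊗ C_*(M̃) → C_*(M;ℝ)`. -/
noncomputable def PhiL (π : C(Mt, M)) (k : ℕ) :
    SChains k Mt (LinfG S false) →ₗ[ℤ] SChains k M ℝ :=
  (Finsupp.lmapDomain ℝ ℤ (fun σ : SSimplex k Mt => π.comp σ)).comp
    (Finsupp.mapRange.linearMap (intAM S).toIntLinearMap)

theorem PhiL_single (π : C(Mt, M)) (k : ℕ) (τ : SSimplex k Mt) (f : LinfG S false) :
    PhiL S π k (Finsupp.single τ f) = Finsupp.single (π.comp τ) (intAM S f) := by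
  simp only [PhiL, LinearMap.comp_apply, Finsupp.mapRange.linearMap_apply,
    Finsupp.mapRange_single, Finsupp.lmapDomain_apply, Finsupp.mapDomain_single]
  rfl

/-- The lifting chain map `C_*(M;ℝ) → L^∞ ⊗ C_*(M̃)` given a choice of lifts. -/
noncomputable def PsiL (k : ℕ) (lf : SSimplex k M → SSimplex k Mt) :
    SChains k M ℝ →ₗ[ℤ] SChains k Mt (LinfG S false) :=
  Finsupp.lsum ℤ fun σ => (Finsupp.lsingle (lf σ)).comp (constR S).toIntLinearMap

theorem PsiL_single (k : ℕ) (lf : SSimplex k M → SSimplex k Mt) (σ : SSimplex k M) (a : ℝ) :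
    PsiL S k lf (Finsupp.single σ a) = Finsupp.single (lf σ) (constR S a) := by
  rw [PsiL, Finsupp.lsum_single]
  rfl

/-- `castChain` as a linear map. -/
noncomputable def castL {Y : Type} [TopologicalSpace Y] (k : ℕ) :
    SChains k Y ℤ →ₗ[ℤ] SChains k Y ℝ :=
  Finsupp.mapRange.linearMap (Int.castAddHom ℝ).toIntLinearMap

theorem castL_eq {Y : Type} [TopologicalSpace Y] (k : ℕ) (c : SChains k Y ℤ) :
    castL k c = castChain c := rfl

/-- `constLG` as an additive homomorphism. -/
noncomputable def constLGHom (b : Bool) : ℤ →+ LinfG S b where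
  toFun := constLG S b
  map_zero' := constLG_zero S b
  map_add' j k := Subtype.ext (add_smul (M := X →ₘ[S.μ] ℝ) j k _)

theorem iotaChain_eq (b : Bool) {k : ℕ} (c : SChains k Mt ℤ) :
    iotaChain S b c
      = Finsupp.mapRange.linearMap ((constLGHom S b).toIntLinearMap) c := rfl

theorem constLG_eq_constR (k : ℤ) : constLG S false k = constR S (k : ℝ) :=
  Subtype.ext (Int.cast_smul_eq_zsmul ℝ k _).symm

end ChainMaps

section RelLemmas

open MeasureTheory

variable {Γ : Type} [Group Γ] {X : Type} [MeasurableSpace X] (S : StdStr Γ X)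
variable {Mt M : Type} [TopologicalSpace Mt] [TopologicalSpace M]
variable (π : C(Mt, M)) (actM : Γ → C(Mt, Mt))

theorem relSub_le_ker_PhiL (hdeck : ∀ g x, π ((actM g) x) = π x) (k : ℕ) :
    relSub k actM S false ≤ LinearMap.ker (PhiL S π k) := by
  rw [relSub]
  apply Submodule.span_le.2
  rintro c ⟨g, σ, f, rfl⟩
  rw [SetLike.mem_coe, LinearMap.mem_ker, map_sub, PhiL_single, PhiL_single]
  have h1 : π.comp ((actM g).comp σ) = π.comp σ :=
    ContinuousMap.ext fun t => hdeck g (σ t)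
  rw [h1, intAM_rhoG, sub_self]

theorem rel_lift_sub (hU : UnivCover Γ Mt M π actM) {k : ℕ}
    (lf : SSimplex k M → SSimplex k Mt) (hlf : ∀ σ, π.comp (lf σ) = σ)
    (τ : SSimplex k Mt) (a : ℝ) :
    Finsupp.single τ (constR S a) - Finsupp.single (lf (π.comp τ)) (constR S a)
      ∈ relSub k actM S false := by
  classical
  set σ0 : SSimplex k Mt := lf (π.comp τ) with hσ0
  have hπ : π.comp σ0 = π.comp τ := hlf _
  have t0 : TSimplex k := Classical.arbitrary _
  have hpt : π (σ0 t0) = π (τ t0) := by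
    have := DFunLike.congr_fun hπ t0
    simpa using this
  obtain ⟨g, hg⟩ := hU.deck_trans (σ0 t0) (τ t0) hpt
  have hcomp : (actM g).comp σ0 = τ := by
    have heq : (fun t => actM g (σ0 t)) = fun t => τ t := by
      refine hU.covering.eq_of_comp_eq ?_ ?_ ?_ t0 hg
      · exact (actM g).continuous.comp σ0.continuous
      · exact τ.continuous
      · funext t
        show π (actM g (σ0 t)) = π (τ t)
        rw [hU.deck_proj]
        have := DFunLike.congr_fun hπ t
        simpa using this
    ext t
    exact congrFun heq t
  have hgen : Finsupp.single ((actM g).comp σ0) (constR S a)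
      - Finsupp.single σ0 (rhoG S false g (constR S a)) ∈ relSub k actM S false :=
    Submodule.subset_span ⟨g, σ0, constR S a, rfl⟩
  rwa [hcomp, rhoG_constR] at hgen

theorem bdry_PsiL_sub_mem (hU : UnivCover Γ Mt M π actM) {k : ℕ}
    (lfs : SSimplex (k + 1) M → SSimplex (k + 1) Mt)
    (hlfs : ∀ σ, π.comp (lfs σ) = σ)
    (lfk : SSimplex k M → SSimplex k Mt) (hlfk : ∀ σ, π.comp (lfk σ) = σ)
    (c : SChains (k + 1) M ℝ) :
    bdryMap k Mt (LinfG S false) (PsiL S (k + 1) lfs c)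
      - PsiL S k lfk (bdryMap k M ℝ c) ∈ relSub k actM S false := by
  induction c using Finsupp.induction_linear with
  | zero => simpa using Submodule.zero_mem _
  | add f g hf hg =>
    rw [map_add, map_add, map_add, map_add]
    have h := Submodule.add_mem _ hf hg
    rwa [sub_add_sub_comm] at h
  | single σ a =>
    rw [PsiL_single, bdry_single, bdry_single, map_sum]
    rw [← Finset.sum_sub_distrib]
    refine Submodule.sum_mem _ fun i _ => ?_
    rw [_root_.map_smul, PsiL_single, ← smul_sub]
    refine Submodule.smul_mem _ _ ?_
    have hface : π.comp ((lfs σ).comp (face k i)) = σ.comp (face k i) := by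
      rw [← ContinuousMap.comp_assoc, hlfs]
    have := rel_lift_sub S π actM hU lfk hlfk ((lfs σ).comp (face k i)) a
    rwa [hface] at this

theorem pushf_mapDomain {k : ℕ} (lf : SSimplex k M → SSimplex k Mt)
    (hlf : ∀ σ, π.comp (lf σ) = σ) (z : SChains k M ℤ) :
    pushf π (Finsupp.mapDomain lf z) = z := by
  rw [pushf, ← Finsupp.mapDomain_comp]
  have h1 : ((fun σ : SSimplex k Mt => π.comp σ) ∘ lf) = id := funext fun σ => hlf σ
  rw [h1, Finsupp.mapDomain_id]

theorem iotaChain_mapDomain_eq_PsiL {k : ℕ} (lf : SSimplex k M → SSimplex k Mt)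
    (z : SChains k M ℤ) :
    iotaChain S false (Finsupp.mapDomain lf z) = PsiL S k lf (castChain z) := by
  induction z using Finsupp.induction_linear with
  | zero => simp [iotaChain, castChain]
  | add f g hf hg =>
    rw [Finsupp.mapDomain_add, iotaChain_eq, map_add, ← iotaChain_eq, ← iotaChain_eq, hf, hg,
      ← castL_eq, ← castL_eq, ← castL_eq, map_add, map_add]
  | single σ a =>
    rw [Finsupp.mapDomain_single, iotaChain, Finsupp.mapRange_single, ← castL_eq, castL,
      Finsupp.mapRange.linearMap_apply, Finsupp.mapRange_single, PsiL_single]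
    show Finsupp.single (lf σ) (constLG S false a) = Finsupp.single (lf σ) (constR S (a : ℝ))
    rw [constLG_eq_constR]

theorem l1R_PhiL_le (k : ℕ) (c : SChains k Mt (LinfG S false)) :
    l1R (PhiL S π k c) ≤ normP S false c := by
  have h1 : PhiL S π k c = Finsupp.mapDomain (fun σ : SSimplex k Mt => π.comp σ)
      (Finsupp.mapRange.linearMap (intAM S).toIntLinearMap c) := rfl
  have h2 : l1R (PhiL S π k c) = wsum (fun a : ℝ => |a|) (PhiL S π k c) := rfl
  rw [h2, h1, Finsupp.mapRange.linearMap_apply]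
  refine le_trans (wsum_mapDomain_le _ abs_zero (fun x y => abs_add_le x y)
    (fun x => abs_nonneg x) _ _) ?_
  rw [wsum_eq_sum_of_subset (fun a : ℝ => |a|) abs_zero _
    (Finsupp.support_mapRange (f := ⇑(intAM S).toIntLinearMap))]
  have h3 : normP S false c
      = ∑ σ ∈ c.support, ∫ x, |((c σ : LinfG S false) : X →ₘ[S.μ] ℝ) x| ∂S.μ := rfl
  rw [h3]
  refine Finset.sum_le_sum fun σ _ => ?_
  rw [Finsupp.mapRange_apply]
  exact abs_intAM_le S (c σ)

theorem normP_PsiL_le (k : ℕ) (lf : SSimplex k M → SSimplex k Mt) (c : SChains k M ℝ) :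
    normP S false (PsiL S k lf c) ≤ l1R c := by
  set w : LinfG S false → ℝ := fun f => ∫ x, |(f : X →ₘ[S.μ] ℝ) x| ∂S.μ with hw
  have hw0 : w 0 = 0 := int_abs_zero S
  have hwsub : ∀ f g : LinfG S false, w (f + g) ≤ w f + w g := int_abs_add_le S
  have hwpos : ∀ f : LinfG S false, 0 ≤ w f := int_abs_nonneg S
  have h1 : PsiL S k lf c
      = c.sum fun σ a => Finsupp.single (lf σ) (constR S a) := by
    rw [PsiL, Finsupp.lsum_apply]
    rfl
  have h2 : normP S false (PsiL S k lf c) = wsum w (PsiL S k lf c) := rfl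
  rw [h2, h1]
  refine le_trans (wsum_finsuppSum_le w hw0 hwsub hwpos c _) ?_
  have h3 : l1R c = ∑ σ ∈ c.support, |c σ| := rfl
  rw [h3]
  refine Finset.sum_le_sum fun σ _ => ?_
  rw [wsum_single w hw0]
  exact le_of_eq (int_abs_constR S (c σ))

end RelLemmas

section FinalLemmas

open MeasureTheory

variable {Γ : Type} [Group Γ] {X : Type} [MeasurableSpace X] (S : StdStr Γ X)
variable {Mt M : Type} [TopologicalSpace Mt] [TopologicalSpace M]
variable (π : C(Mt, M)) (actM : Γ → C(Mt, Mt))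

theorem bdry_PhiL (k : ℕ) (c : SChains (k + 1) Mt (LinfG S false)) :
    bdryMap k M ℝ (PhiL S π (k + 1) c) = PhiL S π k (bdryMap k Mt (LinfG S false) c) := by
  show bdryMap k M ℝ (Finsupp.mapDomain (fun σ : SSimplex (k+1) Mt => π.comp σ)
    (Finsupp.mapRange.linearMap (intAM S).toIntLinearMap c)) = _
  rw [bdry_lmapDomain, bdry_mapRange]
  rfl

theorem bdry_castL {Y : Type} [TopologicalSpace Y] (k : ℕ) (c : SChains (k + 1) Y ℤ) :
    bdryMap k Y ℝ (castChain c) = castChain (bdryMap k Y ℤ c) := by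
  rw [← castL_eq, ← castL_eq, castL, castL]
  exact bdry_mapRange _ c

theorem PhiL_iotaChain (k : ℕ) (zt : SChains k Mt ℤ) :
    PhiL S π k (iotaChain S false zt) = castChain (pushf π zt) := by
  induction zt using Finsupp.induction_linear with
  | zero => simp [iotaChain, pushf, castChain]
  | add f g hf hg =>
    have hp : pushf π (f + g) = pushf π f + pushf π g := Finsupp.mapDomain_add
    have hc : castChain (pushf π f + pushf π g)
        = castChain (pushf π f) + castChain (pushf π g) := by
      rw [← castL_eq, ← castL_eq, ← castL_eq, map_add]
    rw [iotaChain_eq, map_add, ← iotaChain_eq, ← iotaChain_eq, map_add, hf, hg, hp, hc]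
  | single τ j =>
    have h1 : iotaChain S false (Finsupp.single τ j) = Finsupp.single τ (constLG S false j) := by
      rw [iotaChain, Finsupp.mapRange_single]
    rw [h1, PhiL_single, constLG_eq_constR, intAM_constR]
    have h2 : pushf π (Finsupp.single τ j) = Finsupp.single (π.comp τ) j := by
      rw [pushf, Finsupp.mapDomain_single]
    rw [h2, castChain, Finsupp.mapRange_single]

theorem normP_nonneg (b : Bool) {k : ℕ} (c : SChains k Mt (LinfG S b)) :
    0 ≤ normP S b c :=
  Finset.sum_nonneg fun _ _ => int_abs_nonneg S _

theorem l1R_nonneg {Y : Type} [TopologicalSpace Y] {k : ℕ} (c : SChains k Y ℝ) :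
    0 ≤ l1R c :=
  Finset.sum_nonneg fun _ _ => abs_nonneg _

end FinalLemmas

/-- With real coefficients the parametrised simplicial volume recovers
the ordinary simplicial volume: for every oriented closed connected manifold `M` with
fundamental group `Γ` and every standard `Γ`-space `(X,μ)`, the infimum of
`Σ ∫_X |f_j| dμ` over all cycles in `L^∞(X,μ;ℝ) ⊗_{ℤΓ} C_n(M̃;ℤ)` representing the image
of `[M]_ℤ` equals `‖M‖`. -/
theorem real_parametrised_simplicial_volume_eq_simplicial_volume
    (n : ℕ) (Γ : Type) [Group Γ] [Countable Γ]
    (M : Type) [TopologicalSpace M] [CompactSpace M] [ConnectedSpace M] [T2Space M]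
    [ChartedSpace (EuclideanSpace ℝ (Fin n)) M]
    (Mt : Type) [TopologicalSpace Mt] (π : C(Mt, M)) (actM : Γ → C(Mt, Mt))
    (hU : UnivCover Γ Mt M π actM)
    (z : SChains n M ℤ) (hz : IsFundCycle n M z)
    (X : Type) [MeasurableSpace X] (S : StdStr Γ X) :
    pSV false n Γ Mt M π actM X S z = realSV n M z := by
    classical
  haveI := S.prob
  have hnMt : Nonempty Mt := by
    haveI := hU.simplyConnected
    exact PathConnectedSpace.nonempty
  obtain ⟨e⟩ := hnMt
  have hsurj : Function.Surjective (⇑π) := hU.covering.surjective_of_nonempty e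
  have hliftex : ∀ (k : ℕ) (σ : SSimplex k M), ∃ τ : SSimplex k Mt, π.comp τ = σ := by
    intro k σ
    obtain ⟨τ, hτ⟩ := exists_simplex_lift hU.covering hsurj σ
    exact ⟨τ, ContinuousMap.ext hτ⟩
  choose lf hlf using hliftex
  have dirB : ∀ c, c ∈ cyclesSub n M ℝ → castChain z - c ∈ bdriesSub n M ℝ →
      IsPFC n Γ Mt M π actM X S false z (PsiL S n (lf n) c) ∧
        normP S false (PsiL S n (lf n) c) ≤ l1R c := by
    intro c hc1 hc2
    refine ⟨⟨?_, ?_⟩, normP_PsiL_le S n (lf n) c⟩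
    · cases n with
      | zero =>
        have h0 : bdryFrom 0 Mt (LinfG S false) (PsiL S 0 (lf 0) c) = 0 := rfl
        rw [h0]
        exact Submodule.zero_mem _
      | succ m =>
        have hc0 : bdryMap m M ℝ c = 0 := LinearMap.mem_ker.1 hc1
        have hB := bdry_PsiL_sub_mem S π actM hU (lf (m + 1)) (hlf (m + 1)) (lf m) (hlf m) c
        rw [hc0, map_zero, sub_zero] at hB
        exact hB
    · refine ⟨Finsupp.mapDomain (lf n) z, pushf_mapDomain π (lf n) (hlf n) z, ?_⟩
      obtain ⟨d, hd⟩ := hc2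
      have hB := bdry_PsiL_sub_mem S π actM hU (lf (n + 1)) (hlf (n + 1)) (lf n) (hlf n) d
      rw [iotaChain_mapDomain_eq_PsiL]
      have h1 : PsiL S n (lf n) c - PsiL S n (lf n) (castChain z)
          = (bdryMap n Mt (LinfG S false) (PsiL S (n + 1) (lf (n + 1)) d)
              - PsiL S n (lf n) (bdryMap n M ℝ d))
            - bdryMap n Mt (LinfG S false) (PsiL S (n + 1) (lf (n + 1)) d) := by
        rw [sub_sub_cancel_left, hd, map_sub, neg_sub]
      rw [h1]
      refine Submodule.sub_mem _ (Submodule.mem_sup_left hB)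
        (Submodule.mem_sup_right ⟨PsiL S (n + 1) (lf (n + 1)) d, rfl⟩)
  have dirA : ∀ c, IsPFC n Γ Mt M π actM X S false z c →
      (PhiL S π n c ∈ cyclesSub n M ℝ ∧ castChain z - PhiL S π n c ∈ bdriesSub n M ℝ) ∧
        l1R (PhiL S π n c) ≤ normP S false c := by
    rintro c ⟨hcyc, zt, hzt, hrel⟩
    have hker := relSub_le_ker_PhiL S π actM hU.deck_proj
    refine ⟨⟨?_, ?_⟩, l1R_PhiL_le S π n c⟩
    · cases n with
      | zero => exact LinearMap.mem_ker.2 rfl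
      | succ m =>
        refine LinearMap.mem_ker.2 ?_
        show bdryMap m M ℝ (PhiL S π (m + 1) c) = 0
        rw [bdry_PhiL]
        have h0 : bdryMap m Mt (LinfG S false) c ∈ relSub m actM S false := hcyc
        exact LinearMap.mem_ker.1 (hker m h0)
    · obtain ⟨r, hr, bb, hb, hsum⟩ := Submodule.mem_sup.1 hrel
      obtain ⟨d', hd'⟩ := hb
      have hPhir : PhiL S π n r = 0 := LinearMap.mem_ker.1 (hker n hr)
      have heq : PhiL S π n c - castChain z = bdryMap n M ℝ (PhiL S π (n + 1) d') := by
        have h2 : PhiL S π n (c - iotaChain S false zt) = PhiL S π n c - castChain z := by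
          rw [map_sub, PhiL_iotaChain, hzt]
        have h3 : PhiL S π n (c - iotaChain S false zt) = PhiL S π n bb := by
          rw [← hsum, map_add, hPhir, zero_add]
        rw [← h2, h3, ← hd', ← bdry_PhiL]
      refine ⟨-(PhiL S π (n + 1) d'), ?_⟩
      rw [map_neg, ← heq, neg_sub]
  have hzcyc : castChain z ∈ cyclesSub n M ℝ := by
    cases n with
    | zero => exact LinearMap.mem_ker.2 rfl
    | succ m =>
      refine LinearMap.mem_ker.2 ?_
      show bdryMap m M ℝ (castChain z) = 0
      rw [bdry_castL]
      have h0 : bdryMap m M ℤ z = 0 := LinearMap.mem_ker.1 hz.1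
      rw [h0, castChain]
      exact Finsupp.mapRange_zero
  have hzbd : castChain z - castChain z ∈ bdriesSub n M ℝ := by
    rw [sub_self]
    exact Submodule.zero_mem _
  have hAne : Set.Nonempty {r : ℝ | ∃ c, IsPFC n Γ Mt M π actM X S false z c ∧
      r = normP S false c} :=
    ⟨_, PsiL S n (lf n) (castChain z), (dirB _ hzcyc hzbd).1, rfl⟩
  have hBne : Set.Nonempty {r : ℝ | ∃ c, c ∈ cyclesSub n M ℝ ∧
      castChain z - c ∈ bdriesSub n M ℝ ∧ r = l1R c} :=
    ⟨_, castChain z, hzcyc, hzbd, rfl⟩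
  have hAbdd : BddBelow {r : ℝ | ∃ c, IsPFC n Γ Mt M π actM X S false z c ∧
      r = normP S false c} := by
    refine ⟨0, ?_⟩
    rintro r ⟨c, hc, rfl⟩
    exact normP_nonneg S false c
  have hBbdd : BddBelow {r : ℝ | ∃ c, c ∈ cyclesSub n M ℝ ∧
      castChain z - c ∈ bdriesSub n M ℝ ∧ r = l1R c} := by
    refine ⟨0, ?_⟩
    rintro r ⟨c, _, _, rfl⟩
    exact l1R_nonneg c
  rw [pSV, realSV]
  apply le_antisymm
  · refine le_csInf hBne ?_
    rintro r ⟨c, hc1, hc2, rfl⟩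
    have hd := dirB c hc1 hc2
    exact le_trans (csInf_le hAbdd ⟨PsiL S n (lf n) c, hd.1, rfl⟩) hd.2
  · refine le_csInf hAne ?_
    rintro r ⟨c, hc, rfl⟩
    have hd := dirA c hc
    exact le_trans (csInf_le hBbdd ⟨PhiL S π n c, hd.1.1, hd.1.2, rfl⟩) hd.2
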